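/- With q(λ) = Σ_{i=m}^{n} (−1)^{n−i} (s_{n−i}/s_{n−m}) λ^{i}, for every λ ∈ ℂ such that τ := g_m·|λ| < 1 one has |q(λ)| ≥ |λ|^m · (1 − 2τ)/(1 − τ). -/

import Mathlib

open Finset

/-- The `k`-th elementary symmetric function of the values `σ i`, `i : Fin n`
(with the convention `esym σ 0 = 1`). -/
noncomputable def esym {n : ℕ} (σ : Fin n → ℝ) (k : ℕ) : ℝ :=
  ∑ t ∈ Finset.univ.powersetCard k, ∏ i ∈ t, σ i

/-- `g_m = max_{m+1 ≤ i ≤ n} (s_{n-i}/s_{n-m})^{1/(i-m)}`, with the convention `g_n = 1`. -/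
noncomputable def gQ (n : ℕ) (σ : Fin n → ℝ) (m : ℕ) : ℝ :=
  if m = n then 1 else
    sSup ((fun i : ℕ => (esym σ (n - i) / esym σ (n - m)) ^ ((1 : ℝ) / ((i : ℝ) - (m : ℝ)))) ''
      (Set.Icc (m + 1) n))

/-- The polynomial `q(λ) = Σ_{i=m}^{n} (−1)^{n−i} (s_{n−i}/s_{n−m}) λ^{i}`. -/
noncomputable def qPoly (n : ℕ) (σ : Fin n → ℝ) (m : ℕ) (lam : ℂ) : ℂ :=
  ∑ i ∈ Finset.Icc m n,
    (-1 : ℂ) ^ (n - i) * ((esym σ (n - i) / esym σ (n - m) : ℝ) : ℂ) * lam ^ i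

lemma esym_nonneg {n : ℕ} {σ : Fin n → ℝ} (hnn : ∀ i, 0 ≤ σ i) (k : ℕ) : 0 ≤ esym σ k :=
  Finset.sum_nonneg fun t _ => Finset.prod_nonneg fun i _ => hnn i

lemma esym_pos {n k : ℕ} {σ : Fin n → ℝ} (hpos : ∀ i : Fin n, (i : ℕ) < k → 0 < σ i)
    (hnn : ∀ i, 0 ≤ σ i) (hk : k ≤ n) : 0 < esym σ k := by
  classical
  unfold esym
  set t : Finset (Fin n) := Finset.univ.map (Fin.castLEEmb hk) with ht_def
  have ht : t ∈ Finset.univ.powersetCard k := by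
    simp [Finset.mem_powersetCard, ht_def]
  have h1 : 0 < ∏ i ∈ t, σ i := by
    apply Finset.prod_pos
    intro i hi
    simp only [ht_def, Finset.mem_map, Finset.mem_univ, true_and] at hi
    obtain ⟨j, rfl⟩ := hi
    exact hpos _ (by simpa using j.isLt)
  exact h1.trans_le
    (Finset.single_le_sum (f := fun u => ∏ i ∈ u, σ i)
      (fun u _ => Finset.prod_nonneg fun i _ => hnn i) ht)

/-- With `q(λ) = Σ_{i=m}^{n} (−1)^{n−i} (s_{n−i}/s_{n−m}) λ^{i}`, for every
`λ ∈ ℂ` such that `τ := g_m·|λ| < 1` one has `|q(λ)| ≥ |λ|^m · (1 − 2τ)/(1 − τ)`. -/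
theorem stmt1 {s n : ℕ} (hn : 1 ≤ n) (hsn : n ≤ s)
    (M : Matrix (Fin s) (Fin n) ℂ) (σ : Fin n → ℝ)
    (hσnonneg : ∀ i, 0 ≤ σ i)
    (hσanti : ∀ i j : Fin n, i ≤ j → σ j ≤ σ i)
    -- `σ` is the family of singular values of `M`:
    (e : Fin n ≃ Fin n)
    (hσsv : ∀ i, σ i =
      Real.sqrt ((Matrix.isHermitian_conjTranspose_mul_self M).eigenvalues (e i)))
    (r : ℕ) (hrank : M.rank = r)
    (m : ℕ) (hm₁ : n - r ≤ m) (hm₂ : m ≤ n)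
    (lam : ℂ) (hτ : gQ n σ m * ‖lam‖ < 1) :
    ‖lam‖ ^ m * (1 - 2 * (gQ n σ m * ‖lam‖)) /
        (1 - gQ n σ m * ‖lam‖) ≤ ‖qPoly n σ m lam‖ := by
  classical
  set g := gQ n σ m with hgdef
  set a := ‖lam‖ with hadef
  have ha0 : 0 ≤ a := norm_nonneg lam
  -- number of nonzero singular values is `r`
  have hcard : Fintype.card {i : Fin n // σ i ≠ 0} = r := by
    have h1 := (Matrix.isHermitian_conjTranspose_mul_self M).rank_eq_card_non_zero_eigs
    have h2 : (M.conjTranspose * M).rank = r := by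
      open ComplexOrder in
      rw [Matrix.rank_conjTranspose_mul_self, hrank]
    have h3 : Fintype.card {i : Fin n // σ i ≠ 0} =
        Fintype.card {j : Fin n //
          (Matrix.isHermitian_conjTranspose_mul_self M).eigenvalues j ≠ 0} := by
      apply Fintype.card_congr
      refine Equiv.subtypeEquiv e (fun i => ?_)
      have hnn := Matrix.eigenvalues_conjTranspose_mul_self_nonneg M (e i)
      rw [hσsv i]
      constructor
      · intro h h'; exact h (by rw [h', Real.sqrt_zero])
      · intro h h'
        exact h (le_antisymm (Real.sqrt_eq_zero'.mp h') hnn)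
    rw [h3, ← h1, h2]
  -- the first `r` singular values are positive
  have key : ∀ i : Fin n, (i : ℕ) < r → 0 < σ i := by
    intro i hi
    rcases (hσnonneg i).lt_or_eq with h | h
    · exact h
    · exfalso
      have hz : σ i = 0 := h.symm
      have hlt : ∀ j : {j : Fin n // σ j ≠ 0}, ((j : Fin n) : ℕ) < (i : ℕ) := by
        intro j
        by_contra hle
        push_neg at hle
        have hij : i ≤ (j : Fin n) := hle
        have hj0 : σ (j : Fin n) ≤ 0 := by
          have := hσanti i (j : Fin n) hij
          linarith
        exact j.2 (le_antisymm hj0 (hσnonneg j))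
      have hinj : Function.Injective
          (fun j : {j : Fin n // σ j ≠ 0} => (⟨((j : Fin n) : ℕ), hlt j⟩ : Fin (i : ℕ))) := by
        intro x y hxy
        apply Subtype.ext
        apply Fin.ext
        simpa using congrArg Fin.val hxy
      have := Fintype.card_le_of_injective _ hinj
      rw [hcard, Fintype.card_fin] at this
      omega
  have hnm_r : n - m ≤ r := by omega
  have hpos : 0 < esym σ (n - m) :=
    esym_pos (fun i hi => key i (lt_of_lt_of_le hi hnm_r)) hσnonneg (Nat.sub_le n m)
  have hcnn : ∀ i : ℕ, 0 ≤ esym σ (n - i) / esym σ (n - m) :=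
    fun i => div_nonneg (esym_nonneg hσnonneg _) hpos.le
  -- bound coefficients by powers of g, and nonnegativity of g
  have hg_ge : m ≠ n → ∀ i ∈ Set.Icc (m + 1) n,
      (esym σ (n - i) / esym σ (n - m)) ^ ((1 : ℝ) / ((i : ℝ) - (m : ℝ))) ≤ g := by
    intro hmn i hi
    have hbdd : BddAbove ((fun i : ℕ =>
        (esym σ (n - i) / esym σ (n - m)) ^ ((1 : ℝ) / ((i : ℝ) - (m : ℝ)))) ''
        (Set.Icc (m + 1) n)) :=
      ((Set.finite_Icc (m + 1) n).image _).bddAbove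
    rw [hgdef, gQ, if_neg hmn]
    exact le_csSup hbdd (Set.mem_image_of_mem _ hi)
  have hg0 : 0 ≤ g := by
    by_cases hmn : m = n
    · rw [hgdef, gQ, if_pos hmn]; norm_num
    · have hmem : m + 1 ∈ Set.Icc (m + 1) n := by
        simp only [Set.mem_Icc, le_refl, true_and]; omega
      exact le_trans (Real.rpow_nonneg (hcnn (m + 1)) _) (hg_ge hmn _ hmem)
  set τ := g * a with hτdef
  have hτ0 : 0 ≤ τ := mul_nonneg hg0 ha0
  have h1τ : 0 < 1 - τ := by linarith
  have hcb : ∀ i ∈ Finset.Icc (m + 1) n,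
      esym σ (n - i) / esym σ (n - m) ≤ g ^ (i - m) := by
    intro i hi
    rw [Finset.mem_Icc] at hi
    have hmn : m ≠ n := by omega
    have hd0 : (i - m : ℕ) ≠ 0 := by omega
    have hd : (i : ℝ) - (m : ℝ) = ((i - m : ℕ) : ℝ) := by
      push_cast [Nat.cast_sub (by omega : m ≤ i)]; ring
    have hx := hg_ge hmn i (by simp only [Set.mem_Icc]; omega)
    have hrw : esym σ (n - i) / esym σ (n - m) =
        ((esym σ (n - i) / esym σ (n - m)) ^ ((1 : ℝ) / ((i : ℝ) - (m : ℝ)))) ^ (i - m : ℕ) := by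
      rw [← Real.rpow_natCast ((esym σ (n - i) / esym σ (n - m)) ^
        ((1 : ℝ) / ((i : ℝ) - (m : ℝ)))) (i - m), ← Real.rpow_mul (hcnn i), hd, one_div,
        inv_mul_cancel₀ (by exact_mod_cast hd0), Real.rpow_one]
    rw [hrw]
    exact pow_le_pow_left₀ (Real.rpow_nonneg (hcnn i) _) hx _
  -- split off the leading term
  have hsplit : Finset.Icc m n = insert m (Finset.Icc (m + 1) n) := by
    ext x; simp only [Finset.mem_Icc, Finset.mem_insert]; omega
  set B : ℂ := ∑ i ∈ Finset.Icc (m + 1) n,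
    (-1 : ℂ) ^ (n - i) * ((esym σ (n - i) / esym σ (n - m) : ℝ) : ℂ) * lam ^ i with hBdef
  have hq : qPoly n σ m lam = (-1 : ℂ) ^ (n - m) * lam ^ m + B := by
    rw [qPoly, hsplit, Finset.sum_insert (by simp), div_self hpos.ne',
      Complex.ofReal_one, mul_one, ← hBdef]
  have hAabs : ‖(-1 : ℂ) ^ (n - m) * lam ^ m‖ = a ^ m := by
    rw [norm_mul, norm_pow, norm_pow, norm_neg, norm_one, one_pow, one_mul]
  -- triangle inequality
  have htri : a ^ m - ‖B‖ ≤ ‖qPoly n σ m lam‖ := by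
    rw [hq]
    have h := norm_sub_le ((-1 : ℂ) ^ (n - m) * lam ^ m + B) B
    rw [add_sub_cancel_right] at h
    rw [hAabs] at h
    linarith
  -- bound |B|
  have hB1 : ‖B‖ ≤ ∑ i ∈ Finset.Icc (m + 1) n, a ^ m * τ ^ (i - m) := by
    refine (norm_sum_le _ _).trans (Finset.sum_le_sum fun i hi => ?_)
    rw [Finset.mem_Icc] at hi
    rw [norm_mul, norm_mul, norm_pow, norm_pow, norm_neg, norm_one, one_pow, one_mul,
      Complex.norm_of_nonneg (hcnn i)]
    have h1 : esym σ (n - i) / esym σ (n - m) * a ^ i ≤ g ^ (i - m) * a ^ i :=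
      mul_le_mul_of_nonneg_right (hcb i (Finset.mem_Icc.mpr hi)) (pow_nonneg ha0 i)
    refine h1.trans_eq ?_
    have hai : a ^ i = a ^ m * a ^ (i - m) := by
      rw [← pow_add]; congr 1; omega
    rw [hai, hτdef, mul_pow]
    ring
  -- geometric sum bound
  have hsum : ∑ i ∈ Finset.Icc (m + 1) n, a ^ m * τ ^ (i - m) =
      a ^ m * (τ * ∑ j ∈ Finset.range (n - m), τ ^ j) := by
    rw [← Finset.Ico_add_one_right_eq_Icc, Finset.sum_Ico_eq_sum_range]
    have hnn : n + 1 - (m + 1) = n - m := by omega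
    rw [hnn, Finset.mul_sum, Finset.mul_sum]
    refine Finset.sum_congr rfl fun j hj => ?_
    have : m + 1 + j - m = j + 1 := by omega
    rw [this, pow_succ]
    ring
  have hgeom : ∑ j ∈ Finset.range (n - m), τ ^ j ≤ 1 / (1 - τ) := by
    rw [le_div_iff₀ h1τ]
    have hgs := geom_sum_mul τ (n - m)
    nlinarith [pow_nonneg hτ0 (n - m)]
  have hfin : ‖B‖ ≤ a ^ m * τ * (1 / (1 - τ)) := by
    refine hB1.trans ?_
    rw [hsum]
    have h1 : τ * ∑ j ∈ Finset.range (n - m), τ ^ j ≤ τ * (1 / (1 - τ)) :=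
      mul_le_mul_of_nonneg_left hgeom hτ0
    calc a ^ m * (τ * ∑ j ∈ Finset.range (n - m), τ ^ j)
        ≤ a ^ m * (τ * (1 / (1 - τ))) := mul_le_mul_of_nonneg_left h1 (pow_nonneg ha0 m)
      _ = a ^ m * τ * (1 / (1 - τ)) := by ring
  have hEq : a ^ m * (1 - 2 * τ) / (1 - τ) = a ^ m - a ^ m * τ * (1 / (1 - τ)) := by
    field_simp
    ring
  rw [hEq]
  linarith
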